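/- arXiv:2105.12979 — 10 statements merged into one kernel-verified Lean document; each statement's English description precedes it below -/
import Mathlib

section
/- The odd, π-periodic function u defined on [0, π/2] by u(θ) = cos θ + sin θ − 1 (extended oddly and π-periodically to [-π,π]) satisfies ∫_{-π}^{π}u dθ = 0, ∫_{-π}^{π}u cos θ dθ = 0, ∫_{-π}^{π}u sin θ dθ = 0, and (∫((u')² − u²))/(∫|u|)² = 1/(2(4−π)). -/
open Real MeasureTheory

private lemma ae_ne_pt (c : ℝ) : ∀ᵐ x : ℝ, x ≠ c := by
  rw [MeasureTheory.ae_iff]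
  have : {x : ℝ | ¬ x ≠ c} = {c} := by ext; simp
  rw [this]; exact measure_singleton c

/-- interval integrability from equality with a continuous function on the open interval -/
private lemma mkInt (f g : ℝ → ℝ) (a b : ℝ) (hg : Continuous g)
    (hfg : ∀ x ∈ Set.Ioo a b, f x = g x) (hab : a ≤ b) :
    IntervalIntegrable f volume a b := by
  refine (hg.intervalIntegrable a b).congr_ae ?_
  have h1 : ∀ᵐ x ∂(volume.restrict (Set.uIoc a b)), x ∈ Set.uIoc a b :=
    ae_restrict_mem measurableSet_uIoc
  have h2 : ∀ᵐ x ∂(volume.restrict (Set.uIoc a b)), x ≠ b :=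
    ae_restrict_of_ae (ae_ne_pt b)
  have h3 : ∀ᵐ x ∂(volume.restrict (Set.uIoc a b)), x ≠ a :=
    ae_restrict_of_ae (ae_ne_pt a)
  filter_upwards [h1, h2, h3] with x hx hxb hxa
  rw [Set.uIoc_of_le hab] at hx
  exact (hfg x ⟨hx.1, lt_of_le_of_ne hx.2 hxb⟩).symm

private lemma mkEq (f g : ℝ → ℝ) (a b : ℝ)
    (hfg : ∀ x ∈ Set.Ioo a b, f x = g x) (hab : a ≤ b) :
    (∫ x in a..b, f x) = ∫ x in a..b, g x := by
  apply intervalIntegral.integral_congr_ae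
  filter_upwards [ae_ne_pt b] with x hxb hx
  rw [Set.uIoc_of_le hab] at hx
  exact hfg x ⟨hx.1, lt_of_le_of_ne hx.2 hxb⟩

private lemma calcInt (g G : ℝ → ℝ) (a b : ℝ) (hg : Continuous g)
    (hG : ∀ x, HasDerivAt G (g x) x) : (∫ x in a..b, g x) = G b - G a :=
  intervalIntegral.integral_eq_sub_of_hasDerivAt (fun x _ => hG x)
    (hg.intervalIntegrable a b)

set_option maxHeartbeats 1000000 in
theorem stmt_1 (u : ℝ → ℝ)
    (hdef : ∀ θ ∈ Set.Icc (0 : ℝ) (π / 2), u θ = Real.cos θ + Real.sin θ - 1)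
    (hodd : ∀ θ : ℝ, u (-θ) = -u θ)
    (hper : Function.Periodic u π) :
    (∫ θ in (-π)..π, u θ) = 0 ∧
    (∫ θ in (-π)..π, u θ * Real.cos θ) = 0 ∧
    (∫ θ in (-π)..π, u θ * Real.sin θ) = 0 ∧
    (∫ θ in (-π)..π, ((deriv u θ) ^ 2 - (u θ) ^ 2)) /
      (∫ θ in (-π)..π, |u θ|) ^ 2 = 1 / (2 * (4 - π)) := by
  have hpi := Real.pi_pos
  -- formula on [-π/2, 0]
  have h2 : ∀ θ ∈ Set.Icc (-(π/2)) (0:ℝ), u θ = 1 + Real.sin θ - Real.cos θ := by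
    intro θ hθ
    have ha := hdef (-θ) ⟨by linarith [hθ.2], by linarith [hθ.1]⟩
    have hb := hodd θ
    rw [Real.cos_neg, Real.sin_neg] at ha
    linarith
  -- formula on [π/2, π]
  have h3 : ∀ θ ∈ Set.Icc (π/2) π, u θ = Real.cos θ - Real.sin θ + 1 := by
    intro θ hθ
    have ha := h2 (θ - π) ⟨by linarith [hθ.1], by linarith [hθ.2]⟩
    have hp := hper (θ - π)
    simp only [sub_add_cancel] at hp
    rw [Real.sin_sub_pi, Real.cos_sub_pi] at ha
    linarith
  -- deriv u is even
  have hdev : ∀ x : ℝ, deriv u (-x) = deriv u x := by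
    intro x
    have hfe : (fun y => u (-y)) = fun y => -u y := funext hodd
    have e1 : deriv (fun y => u (-y)) x = -deriv u (-x) := deriv_comp_neg u x
    have e2 : deriv (fun y => -u y) x = -deriv u x := deriv.neg
    rw [hfe, e2] at e1
    linarith
  -- deriv formulas on open pieces
  have hd1 : ∀ θ ∈ Set.Ioo (0:ℝ) (π/2), deriv u θ = Real.cos θ - Real.sin θ := by
    intro θ hθ
    have hev : u =ᶠ[nhds θ] fun x => Real.cos x + Real.sin x - 1 := by
      filter_upwards [Ioo_mem_nhds hθ.1 hθ.2] with x hx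
      exact hdef x ⟨hx.1.le, hx.2.le⟩
    rw [hev.deriv_eq]
    have h : HasDerivAt (fun x => Real.cos x + Real.sin x - 1)
        (-Real.sin θ + Real.cos θ) θ :=
      ((Real.hasDerivAt_cos θ).add (Real.hasDerivAt_sin θ)).sub_const 1
    rw [h.deriv]; ring
  have hd2 : ∀ θ ∈ Set.Ioo (π/2) π, deriv u θ = -Real.sin θ - Real.cos θ := by
    intro θ hθ
    have hev : u =ᶠ[nhds θ] fun x => Real.cos x - Real.sin x + 1 := by
      filter_upwards [Ioo_mem_nhds hθ.1 hθ.2] with x hx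
      exact h3 x ⟨hx.1.le, hx.2.le⟩
    rw [hev.deriv_eq]
    have h : HasDerivAt (fun x => Real.cos x - Real.sin x + 1)
        (-Real.sin θ - Real.cos θ) θ :=
      ((Real.hasDerivAt_cos θ).sub (Real.hasDerivAt_sin θ)).add_const 1
    rw [h.deriv]
  -- sign facts
  have hpos1 : ∀ θ ∈ Set.Ioo (0:ℝ) (π/2), 1 ≤ Real.cos θ + Real.sin θ := by
    intro θ hθ
    have hs := Real.sin_nonneg_of_nonneg_of_le_pi (le_of_lt hθ.1) (by linarith [hθ.2])
    have hc := Real.cos_nonneg_of_mem_Icc ⟨by linarith [hθ.1], hθ.2.le⟩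
    nlinarith [Real.sin_sq_add_cos_sq θ]
  have hpos2 : ∀ θ ∈ Set.Ioo (π/2) π, Real.cos θ - Real.sin θ + 1 ≤ 0 := by
    intro θ hθ
    have hs := Real.sin_nonneg_of_nonneg_of_le_pi (by linarith [hθ.1]) hθ.2.le
    have hc : Real.cos θ ≤ 0 :=
      Real.cos_nonpos_of_pi_div_two_le_of_le hθ.1.le (by linarith [hθ.2])
    have hc1 : -1 ≤ Real.cos θ := Real.neg_one_le_cos θ
    nlinarith [Real.sin_sq_add_cos_sq θ]
  -- explicit piece-integral computations
  have S1 : (∫ θ in (0:ℝ)..(π/2), (Real.cos θ + Real.sin θ - 1) * Real.sin θ)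
      = π/4 - 1/2 := by
    rw [calcInt _ (fun x => Real.sin x ^ 2 / 2 + x / 2 - Real.sin x * Real.cos x / 2
        + Real.cos x) 0 (π/2) (by fun_prop) ?_]
    · simp [Real.sin_pi_div_two, Real.cos_pi_div_two]
      try ring
    · intro x
      have hs := Real.hasDerivAt_sin x
      have hc := Real.hasDerivAt_cos x
      have h := ((((hs.pow 2).div_const 2).add ((hasDerivAt_id x).div_const 2)).sub
        ((hs.mul hc).div_const 2)).add hc
      refine h.congr_deriv ?_
      have := Real.sin_sq_add_cos_sq x
      ring_nf
      try nlinarith [Real.sin_sq_add_cos_sq x]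
  have S2 : (∫ θ in (π/2:ℝ)..π, (Real.cos θ - Real.sin θ + 1) * Real.sin θ)
      = 1/2 - π/4 := by
    rw [calcInt _ (fun x => Real.sin x ^ 2 / 2 - x / 2 + Real.sin x * Real.cos x / 2
        - Real.cos x) (π/2) π (by fun_prop) ?_]
    · simp [Real.sin_pi_div_two, Real.cos_pi_div_two, Real.sin_pi, Real.cos_pi]
      try ring
    · intro x
      have hs := Real.hasDerivAt_sin x
      have hc := Real.hasDerivAt_cos x
      have h := ((((hs.pow 2).div_const 2).sub ((hasDerivAt_id x).div_const 2)).add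
        ((hs.mul hc).div_const 2)).sub hc
      refine h.congr_deriv ?_
      ring_nf
      try nlinarith [Real.sin_sq_add_cos_sq x]
  have S3 : (∫ θ in (0:ℝ)..(π/2), ((Real.cos θ - Real.sin θ) ^ 2
      - (Real.cos θ + Real.sin θ - 1) ^ 2)) = 2 - π/2 := by
    rw [calcInt _ (fun x => -x - 2 * Real.sin x ^ 2 + 2 * Real.sin x - 2 * Real.cos x)
        0 (π/2) (by fun_prop) ?_]
    · simp [Real.sin_pi_div_two, Real.cos_pi_div_two]
      try ring
    · intro x
      have hs := Real.hasDerivAt_sin x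
      have hc := Real.hasDerivAt_cos x
      have h := ((((hasDerivAt_id x).neg).sub ((hs.pow 2).const_mul 2)).add
        (hs.const_mul 2)).sub (hc.const_mul 2)
      refine h.congr_deriv ?_
      ring_nf
      try nlinarith [Real.sin_sq_add_cos_sq x]
  have S4 : (∫ θ in (π/2:ℝ)..π, ((-Real.sin θ - Real.cos θ) ^ 2
      - (Real.cos θ - Real.sin θ + 1) ^ 2)) = 2 - π/2 := by
    rw [calcInt _ (fun x => -x + 2 * Real.sin x ^ 2 - 2 * Real.sin x - 2 * Real.cos x)
        (π/2) π (by fun_prop) ?_]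
    · simp [Real.sin_pi_div_two, Real.cos_pi_div_two, Real.sin_pi, Real.cos_pi]
      try ring
    · intro x
      have hs := Real.hasDerivAt_sin x
      have hc := Real.hasDerivAt_cos x
      have h := ((((hasDerivAt_id x).neg).add ((hs.pow 2).const_mul 2)).sub
        (hs.const_mul 2)).sub (hc.const_mul 2)
      refine h.congr_deriv ?_
      ring_nf
      try nlinarith [Real.sin_sq_add_cos_sq x]
  have S5 : (∫ θ in (0:ℝ)..(π/2), (Real.cos θ + Real.sin θ - 1)) = 2 - π/2 := by
    rw [calcInt _ (fun x => Real.sin x - Real.cos x - x) 0 (π/2) (by fun_prop) ?_]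
    · simp [Real.sin_pi_div_two, Real.cos_pi_div_two]
      try ring
    · intro x
      have h := (((Real.hasDerivAt_sin x).sub (Real.hasDerivAt_cos x)).sub
        (hasDerivAt_id x))
      refine h.congr_deriv ?_
      ring
  have S6 : (∫ θ in (π/2:ℝ)..π, (-(Real.cos θ - Real.sin θ + 1))) = 2 - π/2 := by
    rw [calcInt _ (fun x => -Real.sin x - Real.cos x - x) (π/2) π (by fun_prop) ?_]
    · simp [Real.sin_pi_div_two, Real.cos_pi_div_two, Real.sin_pi, Real.cos_pi]
      try ring
    · intro x
      have h := ((((Real.hasDerivAt_sin x).neg).sub (Real.hasDerivAt_cos x)).sub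
        (hasDerivAt_id x))
      refine h.congr_deriv ?_
      ring
  -- abbreviations
  have hhalf : (0:ℝ) ≤ π/2 := by linarith
  have hhalf2 : π/2 ≤ π := by linarith
  -- integrability and values for each integrand on [0, π]
  -- helper: fold negative side
  have flip : ∀ f : ℝ → ℝ, (∫ x in (-π)..(0:ℝ), f x) = ∫ x in (0:ℝ)..π, f (-x) := by
    intro f
    have := (intervalIntegral.integral_comp_neg (a := (0:ℝ)) (b := π) (f := f))
    rw [this]; norm_num
  have negInt : ∀ f : ℝ → ℝ, IntervalIntegrable f volume 0 π →
      IntervalIntegrable (fun x => f (-x)) volume (-π) 0 := by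
    intro f hf
    have := ((IntervalIntegrable.iff_comp_neg (by simp)).mp hf).symm
    simpa using this
  -- the four conclusions
  constructor
  · -- ∫ u = 0
    have i1 : IntervalIntegrable u volume 0 (π/2) :=
      mkInt _ _ _ _ (by fun_prop) (fun x hx => hdef x ⟨hx.1.le, hx.2.le⟩) hhalf
    have i2 : IntervalIntegrable u volume (π/2) π :=
      mkInt _ _ _ _ (by fun_prop) (fun x hx => h3 x ⟨hx.1.le, hx.2.le⟩) hhalf2
    have iu : IntervalIntegrable u volume 0 π := i1.trans i2
    have iun : IntervalIntegrable u volume (-π) 0 := by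
      have h2 := (negInt u iu).neg
      rw [funext hodd] at h2
      simp only [Pi.neg_def, neg_neg] at h2
      exact h2
    rw [← intervalIntegral.integral_add_adjacent_intervals iun iu, flip]
    have : (∫ x in (0:ℝ)..π, u (-x)) = ∫ x in (0:ℝ)..π, -u x := by
      apply intervalIntegral.integral_congr; intro x _
      show u (-x) = -u x
      exact hodd x
    rw [this, intervalIntegral.integral_neg]; ring
  constructor
  · -- ∫ u cos = 0
    have i1 : IntervalIntegrable (fun θ => u θ * Real.cos θ) volume 0 (π/2) :=
      mkInt _ (fun θ => (Real.cos θ + Real.sin θ - 1) * Real.cos θ) _ _ (by fun_prop)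
        (fun x hx => by rw [hdef x ⟨hx.1.le, hx.2.le⟩]) hhalf
    have i2 : IntervalIntegrable (fun θ => u θ * Real.cos θ) volume (π/2) π :=
      mkInt _ (fun θ => (Real.cos θ - Real.sin θ + 1) * Real.cos θ) _ _ (by fun_prop)
        (fun x hx => by rw [h3 x ⟨hx.1.le, hx.2.le⟩]) hhalf2
    have iu : IntervalIntegrable (fun θ => u θ * Real.cos θ) volume 0 π := i1.trans i2
    have iun : IntervalIntegrable (fun θ => u θ * Real.cos θ) volume (-π) 0 := by
      have := negInt _ iu
      have he : (fun x => u (-x) * Real.cos (-x)) = fun x => -(u x * Real.cos x) := by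
        funext x; rw [hodd, Real.cos_neg]; ring
      rw [he] at this
      have h2 := this.neg
      simp only [Pi.neg_def, neg_neg] at h2
      exact h2
    rw [← intervalIntegral.integral_add_adjacent_intervals iun iu, flip]
    have : (∫ x in (0:ℝ)..π, u (-x) * Real.cos (-x))
        = ∫ x in (0:ℝ)..π, -(u x * Real.cos x) := by
      apply intervalIntegral.integral_congr; intro x _
      show u (-x) * Real.cos (-x) = -(u x * Real.cos x)
      rw [hodd, Real.cos_neg]; ring
    rw [this, intervalIntegral.integral_neg]; ring
  constructor
  · -- ∫ u sin = 0
    have i1 : IntervalIntegrable (fun θ => u θ * Real.sin θ) volume 0 (π/2) :=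
      mkInt _ (fun θ => (Real.cos θ + Real.sin θ - 1) * Real.sin θ) _ _ (by fun_prop)
        (fun x hx => by rw [hdef x ⟨hx.1.le, hx.2.le⟩]) hhalf
    have i2 : IntervalIntegrable (fun θ => u θ * Real.sin θ) volume (π/2) π :=
      mkInt _ (fun θ => (Real.cos θ - Real.sin θ + 1) * Real.sin θ) _ _ (by fun_prop)
        (fun x hx => by rw [h3 x ⟨hx.1.le, hx.2.le⟩]) hhalf2
    have iu : IntervalIntegrable (fun θ => u θ * Real.sin θ) volume 0 π := i1.trans i2
    have iun : IntervalIntegrable (fun θ => u θ * Real.sin θ) volume (-π) 0 := by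
      have := negInt _ iu
      have he : (fun x => u (-x) * Real.sin (-x)) = fun x => u x * Real.sin x := by
        funext x; rw [hodd, Real.sin_neg]; ring
      rwa [he] at this
    have hv : (∫ θ in (0:ℝ)..π, u θ * Real.sin θ) = 0 := by
      rw [← intervalIntegral.integral_add_adjacent_intervals i1 i2,
        mkEq _ (fun θ => (Real.cos θ + Real.sin θ - 1) * Real.sin θ) _ _
          (fun x hx => by rw [hdef x ⟨hx.1.le, hx.2.le⟩]) hhalf,
        mkEq _ (fun θ => (Real.cos θ - Real.sin θ + 1) * Real.sin θ) _ _
          (fun x hx => by rw [h3 x ⟨hx.1.le, hx.2.le⟩]) hhalf2, S1, S2]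
      ring
    rw [← intervalIntegral.integral_add_adjacent_intervals iun iu, flip]
    have : (∫ x in (0:ℝ)..π, u (-x) * Real.sin (-x))
        = ∫ x in (0:ℝ)..π, u x * Real.sin x := by
      apply intervalIntegral.integral_congr; intro x _
      show u (-x) * Real.sin (-x) = u x * Real.sin x
      rw [hodd, Real.sin_neg]; ring
    rw [this, hv]; linarith
  · -- the ratio
    set f4 : ℝ → ℝ := fun θ => (deriv u θ) ^ 2 - (u θ) ^ 2 with hf4
    have e1 : ∀ x ∈ Set.Ioo (0:ℝ) (π/2), f4 x
        = (Real.cos x - Real.sin x) ^ 2 - (Real.cos x + Real.sin x - 1) ^ 2 := by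
      intro x hx
      rw [hf4]; simp only
      rw [hd1 x hx, hdef x ⟨hx.1.le, hx.2.le⟩]
    have e2 : ∀ x ∈ Set.Ioo (π/2:ℝ) π, f4 x
        = (-Real.sin x - Real.cos x) ^ 2 - (Real.cos x - Real.sin x + 1) ^ 2 := by
      intro x hx
      rw [hf4]; simp only
      rw [hd2 x hx, h3 x ⟨hx.1.le, hx.2.le⟩]
    have i1 : IntervalIntegrable f4 volume 0 (π/2) :=
      mkInt _ _ _ _ (by fun_prop) e1 hhalf
    have i2 : IntervalIntegrable f4 volume (π/2) π :=
      mkInt _ _ _ _ (by fun_prop) e2 hhalf2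
    have iu : IntervalIntegrable f4 volume 0 π := i1.trans i2
    have iun : IntervalIntegrable f4 volume (-π) 0 := by
      have := negInt _ iu
      have he : (fun x => f4 (-x)) = f4 := by
        funext x; rw [hf4]; simp only [hdev x, hodd x]; ring
      rwa [he] at this
    have hN : (∫ θ in (-π)..π, f4 θ) = 2 * (4 - π) := by
      rw [← intervalIntegral.integral_add_adjacent_intervals iun iu, flip]
      have h0 : (∫ x in (0:ℝ)..π, f4 (-x)) = ∫ x in (0:ℝ)..π, f4 x := by
        apply intervalIntegral.integral_congr; intro x _
        show f4 (-x) = f4 x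
        rw [hf4]; simp only [hdev x, hodd x]; ring
      rw [h0, ← intervalIntegral.integral_add_adjacent_intervals i1 i2,
        mkEq _ _ _ _ e1 hhalf, mkEq _ _ _ _ e2 hhalf2, S3, S4]
      ring
    -- |u|
    set f5 : ℝ → ℝ := fun θ => |u θ| with hf5
    have a1 : ∀ x ∈ Set.Ioo (0:ℝ) (π/2), f5 x = Real.cos x + Real.sin x - 1 := by
      intro x hx
      rw [hf5]; simp only
      rw [hdef x ⟨hx.1.le, hx.2.le⟩, abs_of_nonneg (by linarith [hpos1 x hx])]
    have a2 : ∀ x ∈ Set.Ioo (π/2:ℝ) π, f5 x = -(Real.cos x - Real.sin x + 1) := by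
      intro x hx
      rw [hf5]; simp only
      rw [h3 x ⟨hx.1.le, hx.2.le⟩, abs_of_nonpos (hpos2 x hx)]
    have i1' : IntervalIntegrable f5 volume 0 (π/2) :=
      mkInt _ _ _ _ (by fun_prop) a1 hhalf
    have i2' : IntervalIntegrable f5 volume (π/2) π :=
      mkInt _ _ _ _ (by fun_prop) a2 hhalf2
    have iu' : IntervalIntegrable f5 volume 0 π := i1'.trans i2'
    have iun' : IntervalIntegrable f5 volume (-π) 0 := by
      have := negInt _ iu'
      have he : (fun x => f5 (-x)) = f5 := by
        funext x; rw [hf5]; simp only [hodd x, abs_neg]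
      rwa [he] at this
    have hD : (∫ θ in (-π)..π, f5 θ) = 2 * (4 - π) := by
      rw [← intervalIntegral.integral_add_adjacent_intervals iun' iu', flip]
      have h0 : (∫ x in (0:ℝ)..π, f5 (-x)) = ∫ x in (0:ℝ)..π, f5 x := by
        apply intervalIntegral.integral_congr; intro x _
        show f5 (-x) = f5 x
        rw [hf5]; simp only [hodd x, abs_neg]
      rw [h0, ← intervalIntegral.integral_add_adjacent_intervals i1' i2',
        mkEq _ _ _ _ a1 hhalf, mkEq _ _ _ _ a2 hhalf2, S5, S6]
      ring
    rw [hN, hD]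
    have h4 : (4:ℝ) - π > 0 := by linarith [Real.pi_lt_d2]
    field_simp
end

section
/- For every x in the open interval (π/2, π), x cos x − sin x + (1/π)(2x + sin(2x)) < 0. -/
open Real

theorem stmt_3 (x : ℝ) (hx : x ∈ Set.Ioo (π / 2) π) :
    x * Real.cos x - Real.sin x + (1 / π) * (2 * x + Real.sin (2 * x)) < 0 := by
  obtain ⟨h1, h2⟩ := hx
  have hπ := Real.pi_pos
  obtain ⟨t, ht⟩ : ∃ t : ℝ, x = t + π / 2 := ⟨x - π / 2, by ring⟩
  have ht0 : 0 < t := by linarith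
  have ht2 : t < π / 2 := by linarith
  have hcos : Real.cos x = -Real.sin t := by
    rw [ht, Real.cos_add_pi_div_two]
  have hsin : Real.sin x = Real.cos t := by
    rw [ht, Real.sin_add_pi_div_two]
  have hsin2 : Real.sin (2 * x) = -Real.sin (2 * t) := by
    have h : 2 * x = 2 * t + π := by rw [ht]; ring
    rw [h, Real.sin_add_pi]
  rw [hcos, hsin, hsin2]
  have hjordan : 2 / π * t ≤ Real.sin t := Real.mul_le_sin ht0.le ht2.le
  have hcosb : 1 - t ^ 2 / 2 ≤ Real.cos t := Real.one_sub_sq_div_two_le_cos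
  have hs2 : 0 ≤ Real.sin (2 * t) := by
    apply Real.sin_nonneg_of_nonneg_of_le_pi (by linarith)
    nlinarith
  have hx0 : 0 < x := by linarith
  -- x * (-sin t) ≤ x * (-(2/π * t))
  have hmul : x * (-Real.sin t) ≤ x * (-(2 / π * t)) := by
    apply mul_le_mul_of_nonneg_left (by linarith) hx0.le
  have hpi4 : π < 4 := by
    have := Real.pi_lt_d2; linarith
  have hpi2 : 2 < π := by
    have := Real.pi_gt_three; linarith
  have key : x * (-(2 / π * t)) - (1 - t ^ 2 / 2) + (1 / π) * (2 * x) < 0 := by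
    rw [ht]
    have h3 : (t + π / 2) * (-(2 / π * t)) = -(2 / π) * t ^ 2 - t := by
      field_simp; ring
    have h4 : (1 / π) * (2 * (t + π / 2)) = 2 / π * t + 1 := by
      field_simp
    rw [h3, h4]
    have hc1 : t ^ 2 / 2 - 2 / π * t ^ 2 < 0 := by
      have : 1 / 2 - 2 / π < 0 := by
        rw [sub_neg]
        rw [div_lt_div_iff₀ (by norm_num) hπ]
        linarith
      have := mul_neg_of_neg_of_pos this (pow_pos ht0 2)
      nlinarith [this]
    have hc2 : 2 / π * t - t < 0 := by
      have h5 : 2 / π - 1 < 0 := by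
        rw [sub_neg, div_lt_one hπ]; linarith
      have := mul_neg_of_neg_of_pos h5 ht0
      nlinarith [this]
    linarith
  have hdrop : (1 / π) * (2 * x + -Real.sin (2 * t)) ≤ (1 / π) * (2 * x) := by
    have : 0 < 1 / π := by positivity
    nlinarith
  linarith
end

section
/- For every ℓ in the open interval (π, 2π), ℓ − 2 tan(ℓ/2) + (4/π) sin(ℓ/2)(1 + ℓ/ sin ℓ) > 0. -/
open Real

noncomputable def fAux : ℝ → ℝ :=
  fun x => 2 * x * Real.cos x - 2 * Real.sin x + (4 / π) * (Real.sin x * Real.cos x + x)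

lemma fAux_hasDerivAt (x : ℝ) :
    HasDerivAt fAux (2 * Real.cos x + 2 * x * (-Real.sin x) - 2 * Real.cos x
      + (4 / π) * ((Real.cos x * Real.cos x + Real.sin x * (-Real.sin x)) + 1)) x := by
  have h1 : HasDerivAt (fun x : ℝ => 2 * x * Real.cos x)
      (2 * Real.cos x + 2 * x * (-Real.sin x)) x := by
    have := (((hasDerivAt_id x).const_mul 2).mul (Real.hasDerivAt_cos x))
    exact this.congr_deriv (by simp only [id_eq]; ring)
  have h2 : HasDerivAt (fun x : ℝ => 2 * Real.sin x) (2 * Real.cos x) x :=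
    (Real.hasDerivAt_sin x).const_mul 2
  have h3 : HasDerivAt (fun x : ℝ => Real.sin x * Real.cos x + x)
      ((Real.cos x * Real.cos x + Real.sin x * (-Real.sin x)) + 1) x :=
    ((Real.hasDerivAt_sin x).mul (Real.hasDerivAt_cos x)).add (hasDerivAt_id x)
  exact (h1.sub h2).add (h3.const_mul (4 / π))

lemma quadAux {p u : ℝ} (hp : 3.141592 < p) (h1 : 0.741592 < u) (h2 : u < 1.5707965) :
    8 * 9.8696077 - 32 * u ^ 2 < 9.8696077 * (4 * (p - u) * u) := by
  have hqq : (0:ℝ) ≤ (u - 0.741592) * (1.5707965 - u) := by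
    apply mul_nonneg <;> linarith
  have hup : (0:ℝ) < u * (p - 3.141592) := by
    apply mul_pos <;> linarith
  nlinarith [hqq, hup]

lemma fAux_deriv_neg {x : ℝ} (h1 : π / 2 < x) (h2 : x < 2.4) :
    2 * Real.cos x + 2 * x * (-Real.sin x) - 2 * Real.cos x
      + (4 / π) * ((Real.cos x * Real.cos x + Real.sin x * (-Real.sin x)) + 1) < 0 := by
  have hπ1 : (3.141592 : ℝ) < π := Real.pi_gt_d6
  have hπ2 : π < 3.141593 := Real.pi_lt_d6
  have hπ0 : (0 : ℝ) < π := by linarith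
  have hpyth : Real.sin x ^ 2 + Real.cos x ^ 2 = 1 := Real.sin_sq_add_cos_sq x
  have h4 : Real.cos x * Real.cos x + Real.sin x * (-Real.sin x) + 1
      = 2 * Real.cos x ^ 2 := by nlinarith
  rw [h4]
  -- Jordan-type bound: π sin x ≥ 2(π - x)
  have hs' : 2 * (π - x) ≤ Real.sin x * π := by
    have h := Real.mul_le_sin (x := π - x) (by linarith) (by linarith)
    rw [Real.sin_pi_sub] at h
    rw [div_mul_eq_mul_div, div_le_iff₀ hπ0] at h
    linarith
  have hu0 : (0:ℝ) < π - x := by linarith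
  have hπsq : π ^ 2 < 9.8696077 := by
    nlinarith [mul_lt_mul_of_pos_left hπ2 hπ0]
  -- π² cos² x ≤ π² - 4(π-x)²
  have hcsq : π ^ 2 * Real.cos x ^ 2 ≤ π ^ 2 - 4 * (π - x) ^ 2 := by
    nlinarith [hs', sq_nonneg (Real.sin x * π - 2 * (π - x)), sq_nonneg (Real.sin x)]
  have hcos1 : Real.cos x ^ 2 ≤ 1 := Real.cos_sq_le_one x
  have hc2 : 9.8696077 * Real.cos x ^ 2 ≤ 9.8696077 - 4 * (π - x) ^ 2 := by
    nlinarith [mul_nonneg (show (0:ℝ) ≤ 9.8696077 - π ^ 2 by linarith)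
      (show (0:ℝ) ≤ 1 - Real.cos x ^ 2 by linarith)]
  have hu1 : (0.741592:ℝ) < π - x := by linarith
  have hu2 : π - x < 1.5707965 := by linarith
  have hquad : 8 * 9.8696077 - 32 * (π - x) ^ 2 < 9.8696077 * (4 * x * (π - x)) := by
    have h := quadAux Real.pi_gt_d6 hu1 hu2
    have hx' : π - (π - x) = x := by ring
    rw [hx'] at h
    exact h
  have he2 : 4 * x * (π - x) ≤ 2 * x * Real.sin x * π := by
    have hx0 : (0:ℝ) < x := by linarith
    nlinarith [mul_le_mul_of_nonneg_left hs' (le_of_lt hx0)]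
  have key : 8 * Real.cos x ^ 2 < 2 * x * Real.sin x * π := by
    nlinarith [hc2, hquad, he2]
  have hfinal : (4 / π) * (2 * Real.cos x ^ 2) < 2 * x * Real.sin x := by
    rw [div_mul_eq_mul_div, div_lt_iff₀ hπ0]
    linarith
  linarith

lemma fAux_neg_left {x : ℝ} (h1 : π / 2 < x) (h2 : x ≤ 2.4) : fAux x < 0 := by
  have hanti : StrictAntiOn fAux (Set.Icc (π / 2) 2.4) := by
    apply strictAntiOn_of_deriv_neg (convex_Icc _ _)
    · apply Continuous.continuousOn
      unfold fAux
      fun_prop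
    · intro y hy
      rw [interior_Icc] at hy
      rw [(fAux_hasDerivAt y).deriv]
      exact fAux_deriv_neg hy.1 hy.2
  have h0 : fAux (π / 2) = 0 := by
    unfold fAux
    rw [Real.cos_pi_div_two, Real.sin_pi_div_two]
    have hπ0 : π ≠ 0 := ne_of_gt Real.pi_pos
    field_simp
    ring
  have := hanti (Set.left_mem_Icc.2 (by linarith)) (Set.mem_Icc.2 ⟨le_of_lt h1, h2⟩) h1
  rw [h0] at this
  exact this

lemma hAux {t : ℝ} (ht0 : 0 < t) (ht1 : t ≤ 0.75) :
    0 < Real.sin t + (2 / π) * (Real.sin t * Real.cos t) - 2 + 2 * t / π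
      + (π - t) * Real.cos t := by
  have hπ1 : (3.141592 : ℝ) < π := Real.pi_gt_d6
  have hπ2 : π < 3.141593 := Real.pi_lt_d6
  have hπ0 : (0 : ℝ) < π := by linarith
  have hs : t - t ^ 3 / 4 < Real.sin t := by
    have := Real.sin_gt_sub_cube ht0
    linarith [pow_pos ht0 3]
  have hc : 1 - t ^ 2 / 2 ≤ Real.cos t := Real.one_sub_sq_div_two_le_cos
  have hs0 : 0 < t - t ^ 3 / 4 := by nlinarith
  have hc0 : (0:ℝ) < 1 - t ^ 2 / 2 := by nlinarith
  have hsin0 : 0 < Real.sin t := by linarith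
  have hcos0 : 0 < Real.cos t := by linarith
  have hterm1 : 0 < (2 / π) * (Real.sin t * Real.cos t) := by positivity
  have hterm2 : 0 < 2 * t / π := by positivity
  have hmc : (π - t) * (1 - t ^ 2 / 2) ≤ (π - t) * Real.cos t :=
    mul_le_mul_of_nonneg_left hc (by linarith)
  have ht2 : t ^ 2 ≤ 0.5625 := by nlinarith
  have hR1 : 0 < (t - t ^ 3 / 4) - 2 + (3.141592 - t) * (1 - t ^ 2 / 2) := by
    nlinarith [ht2, pow_nonneg (le_of_lt ht0) 3]
  have hπterm : (3.141592 - t) * (1 - t ^ 2 / 2) ≤ (π - t) * (1 - t ^ 2 / 2) := by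
    nlinarith [mul_nonneg (show (0:ℝ) ≤ π - 3.141592 by linarith) (le_of_lt hc0)]
  linarith

lemma fAux_neg_right {x : ℝ} (h1 : 2.4 ≤ x) (h2 : x < π) : fAux x < 0 := by
  have hπ1 : (3.141592 : ℝ) < π := Real.pi_gt_d6
  have hπ2 : π < 3.141593 := Real.pi_lt_d6
  have hπ0 : (0 : ℝ) < π := by linarith
  have ht0 : 0 < π - x := by linarith
  have ht1 : π - x ≤ 0.75 := by linarith
  have h := hAux ht0 ht1
  have hcx : Real.cos x = -Real.cos (π - x) := by
    rw [Real.cos_pi_sub]; ring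
  have hsx : Real.sin x = Real.sin (π - x) := by
    rw [Real.sin_pi_sub]
  unfold fAux
  rw [hcx, hsx]
  set t := π - x with htdef
  have hx : x = π - t := by rw [htdef]; ring
  rw [hx]
  have hπne : π ≠ 0 := ne_of_gt hπ0
  have hexp : 2 * (π - t) * -Real.cos t - 2 * Real.sin t
      + 4 / π * (Real.sin t * -Real.cos t + (π - t))
      = -2 * (Real.sin t + (2 / π) * (Real.sin t * Real.cos t) - 2 + 2 * t / π
        + (π - t) * Real.cos t) := by
    field_simp
    ring
  rw [hexp]
  linarith

lemma fAux_neg {x : ℝ} (h1 : π / 2 < x) (h2 : x < π) : fAux x < 0 := by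
  rcases le_or_gt x 2.4 with h | h
  · exact fAux_neg_left h1 h
  · exact fAux_neg_right (le_of_lt h) h2

theorem stmt_4 (ℓ : ℝ) (hℓ : ℓ ∈ Set.Ioo π (2 * π)) :
    ℓ - 2 * Real.tan (ℓ / 2) + (4 / π) * Real.sin (ℓ / 2) * (1 + ℓ / Real.sin ℓ) > 0 := by
  obtain ⟨hl1, hl2⟩ := hℓ
  have hπ0 : (0 : ℝ) < π := Real.pi_pos
  have hx1 : π / 2 < ℓ / 2 := by linarith
  have hx2 : ℓ / 2 < π := by linarith
  have hsin : 0 < Real.sin (ℓ / 2) := Real.sin_pos_of_pos_of_lt_pi (by linarith) hx2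
  have hcos : Real.cos (ℓ / 2) < 0 := Real.cos_neg_of_pi_div_two_lt_of_lt hx1 (by linarith)
  have hsne : Real.sin (ℓ / 2) ≠ 0 := ne_of_gt hsin
  have hcne : Real.cos (ℓ / 2) ≠ 0 := ne_of_lt hcos
  have hπne : π ≠ 0 := ne_of_gt hπ0
  have hsinℓ : Real.sin ℓ = 2 * Real.sin (ℓ / 2) * Real.cos (ℓ / 2) := by
    have h : ℓ = 2 * (ℓ / 2) := by ring
    nth_rewrite 1 [h]
    rw [Real.sin_two_mul]
  have hf : fAux (ℓ / 2) < 0 := fAux_neg hx1 hx2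
  have heq : ℓ - 2 * Real.tan (ℓ / 2) + (4 / π) * Real.sin (ℓ / 2) * (1 + ℓ / Real.sin ℓ)
      = fAux (ℓ / 2) / Real.cos (ℓ / 2) := by
    rw [hsinℓ, Real.tan_eq_sin_div_cos]
    unfold fAux
    field_simp
  rw [heq]
  exact div_pos_of_neg_of_neg hf hcos
end

section
/- For all x in [0, π], 2 tan(x/2) − x ≤ (x²/12) · 2 sin(x/2)(1 + x/sin x); equivalently the function h(x) = (2 tan(x/2) − x)/(2 sin(x/2)(1 + x/sin x)) satisfies h(x) ≤ x²/12 on (0, π). -/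
open Real

lemma aux_zero_le {f f' : ℝ → ℝ} (hd : ∀ t, HasDerivAt f (f' t) t)
    (h' : ∀ t, 0 < t → 0 ≤ f' t) (h0 : f 0 = 0) {t : ℝ} (ht : 0 ≤ t) : 0 ≤ f t := by
  have hm : MonotoneOn f (Set.Ici 0) := by
    apply monotoneOn_of_deriv_nonneg (convex_Ici 0)
      (fun x _ => (hd x).continuousAt.continuousWithinAt)
      (fun x hx => ((hd x).differentiableAt.differentiableWithinAt))
    intro x hx
    rw [(hd x).deriv]
    exact h' x (by simpa using hx)
  calc (0:ℝ) = f 0 := h0.symm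
    _ ≤ f t := hm (Set.self_mem_Ici) ht ht

lemma sin_ge_cubic {t : ℝ} (ht : 0 ≤ t) : t - t ^ 3 / 6 ≤ Real.sin t := by
  have := aux_zero_le (f := fun t => Real.sin t - t + t ^ 3 / 6)
    (f' := fun t => Real.cos t - 1 + 3 * t ^ 2 / 6)
    (fun t => (((Real.hasDerivAt_sin t).sub (hasDerivAt_id t)).add
      ((hasDerivAt_pow 3 t).div_const 6)).congr_deriv (by ring))
    (fun t _ => by nlinarith [Real.one_sub_sq_div_two_le_cos (x := t)])
    (by simp) ht
  linarith [this]

lemma cos_le_quartic {t : ℝ} (ht : 0 ≤ t) : Real.cos t ≤ 1 - t ^ 2 / 2 + t ^ 4 / 24 := by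
  have := aux_zero_le (f := fun t => 1 - t ^ 2 / 2 + t ^ 4 / 24 - Real.cos t)
    (f' := fun t => Real.sin t - (t - t ^ 3 / 6))
    (fun t => ((((hasDerivAt_const t (1:ℝ)).sub ((hasDerivAt_pow 2 t).div_const 2)).add
      ((hasDerivAt_pow 4 t).div_const 24)).sub (Real.hasDerivAt_cos t)).congr_deriv (by ring))
    (fun t ht => by linarith [sin_ge_cubic ht.le])
    (by simp) ht
  linarith [this]

lemma sin_le_quintic {t : ℝ} (ht : 0 ≤ t) : Real.sin t ≤ t - t ^ 3 / 6 + t ^ 5 / 120 := by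
  have := aux_zero_le (f := fun t => t - t ^ 3 / 6 + t ^ 5 / 120 - Real.sin t)
    (f' := fun t => (1 - t ^ 2 / 2 + t ^ 4 / 24) - Real.cos t)
    (fun t => ((((hasDerivAt_id t).sub ((hasDerivAt_pow 3 t).div_const 6)).add
      ((hasDerivAt_pow 5 t).div_const 120)).sub (Real.hasDerivAt_sin t)).congr_deriv (by ring))
    (fun t ht => by linarith [cos_le_quartic ht.le])
    (by simp) ht
  linarith [this]

lemma cos_ge_sextic {t : ℝ} (ht : 0 ≤ t) :
    1 - t ^ 2 / 2 + t ^ 4 / 24 - t ^ 6 / 720 ≤ Real.cos t := by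
  have := aux_zero_le (f := fun t => Real.cos t - (1 - t ^ 2 / 2 + t ^ 4 / 24 - t ^ 6 / 720))
    (f' := fun t => (t - t ^ 3 / 6 + t ^ 5 / 120) - Real.sin t)
    (fun t => ((Real.hasDerivAt_cos t).sub ((((hasDerivAt_const t (1:ℝ)).sub
      ((hasDerivAt_pow 2 t).div_const 2)).add ((hasDerivAt_pow 4 t).div_const 24)).sub
      ((hasDerivAt_pow 6 t).div_const 720))).congr_deriv (by ring))
    (fun t ht => by linarith [sin_le_quintic ht.le])
    (by simp) ht
  linarith [this]

lemma key_F {t : ℝ} (ht : 0 ≤ t) (ht2 : t ≤ π / 2) :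
    0 ≤ t ^ 3 / 3 + t ^ 2 / 3 * Real.sin t * Real.cos t - Real.sin t + t * Real.cos t := by
  have hs : 0 ≤ Real.sin t := Real.sin_nonneg_of_nonneg_of_le_pi ht (by linarith [Real.pi_pos])
  have hc : 0 ≤ Real.cos t := Real.cos_nonneg_of_mem_Icc ⟨by linarith [Real.pi_pos], ht2⟩
  have h1 := sin_le_quintic ht
  have h2 := cos_ge_sextic ht
  have hpi : t ≤ 1.6 := by nlinarith [Real.pi_lt_d2]
  have h3 : t * (1 - t ^ 2 / 2 + t ^ 4 / 24 - t ^ 6 / 720) ≤ t * Real.cos t :=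
    mul_le_mul_of_nonneg_left h2 ht
  have h24 : 0 ≤ 24 - t ^ 2 := by nlinarith
  have h4 : 0 ≤ t ^ 5 / 30 - t ^ 7 / 720 := by nlinarith [mul_nonneg (pow_nonneg ht 5) h24]
  have hmid : 0 ≤ t ^ 2 / 3 * Real.sin t * Real.cos t := by positivity
  nlinarith [h1, h3, h4, hmid]

theorem stmt_6 (x : ℝ) (hx : x ∈ Set.Icc (0 : ℝ) π) :
    2 * Real.tan (x / 2) - x ≤
      (x ^ 2 / 12) * (2 * Real.sin (x / 2) * (1 + x / Real.sin x)) := by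
  obtain ⟨hx0, hxpi⟩ := hx
  rcases eq_or_lt_of_le hx0 with rfl | hx0'
  · norm_num
  rcases eq_or_lt_of_le hxpi with rfl | hxpi'
  · rw [Real.tan_pi_div_two, Real.sin_pi, Real.sin_pi_div_two]
    simp
    nlinarith [Real.pi_pos]
  · have ht0 : 0 < x / 2 := by linarith
    have ht2 : x / 2 < π / 2 := by linarith
    have hs : 0 < Real.sin (x / 2) := Real.sin_pos_of_pos_of_lt_pi ht0 (by linarith [Real.pi_pos])
    have hc : 0 < Real.cos (x / 2) := Real.cos_pos_of_mem_Ioo ⟨by linarith [Real.pi_pos], ht2⟩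
    have key := key_F ht0.le ht2.le
    have hsx : Real.sin x = 2 * Real.sin (x / 2) * Real.cos (x / 2) := by
      rw [show x = 2 * (x / 2) by ring, Real.sin_two_mul]
      ring_nf
    rw [Real.tan_eq_sin_div_cos, hsx]
    field_simp
    nlinarith [mul_nonneg key hc.le, mul_pos hs hc, sq_nonneg x, mul_pos (mul_pos hs hc) hc]
end

section
/- For every x in [0, π], the function f(x) = (x²/12)(x + sin x) − 2 sin(x/2) + x cos(x/2) is nonnegative. -/
open Real

lemma aux_nonneg_of_deriv {f f' : ℝ → ℝ} (hf : ∀ y, HasDerivAt f (f' y) y)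
    (h0 : f 0 = 0) (hd : ∀ y, 0 ≤ y → 0 ≤ f' y) {x : ℝ} (hx : 0 ≤ x) : 0 ≤ f x := by
  have hmono : MonotoneOn f (Set.Ici 0) := by
    apply monotoneOn_of_deriv_nonneg (convex_Ici 0)
    · exact fun y _ => (hf y).continuousAt.continuousWithinAt
    · exact fun y _ => (hf y).differentiableAt.differentiableWithinAt
    · intro y hy
      rw [(hf y).deriv]
      rw [interior_Ici] at hy
      exact hd y (le_of_lt hy)
  calc (0:ℝ) = f 0 := h0.symm
  _ ≤ f x := hmono (by simp : (0:ℝ) ∈ Set.Ici (0:ℝ)) hx hx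

lemma sin_lb1 {x : ℝ} (hx : 0 ≤ x) : x - x^3/6 ≤ Real.sin x := by
  have h := aux_nonneg_of_deriv (f := fun y => Real.sin y - y + y^3/6)
    (f' := fun y => Real.cos y - 1 + y^2/2) (fun y => by
      have h1 := ((Real.hasDerivAt_sin y).sub (hasDerivAt_id y)).add ((hasDerivAt_pow 3 y).div_const 6)
      exact h1.congr_deriv (by simp; ring)) (by norm_num)
    (fun y hy => by
      have := Real.one_sub_sq_div_two_le_cos (x := y)
      nlinarith) hx
  linarith

lemma cos_ub2 {x : ℝ} (hx : 0 ≤ x) : Real.cos x ≤ 1 - x^2/2 + x^4/24 := by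
  have h := aux_nonneg_of_deriv (f := fun y => 1 - y^2/2 + y^4/24 - Real.cos y)
    (f' := fun y => -y + y^3/6 + Real.sin y) (fun y => by
      have h1 := ((((hasDerivAt_pow 2 y).div_const 2).neg.const_add 1).add ((hasDerivAt_pow 4 y).div_const 24)).sub (Real.hasDerivAt_cos y)
      exact h1.congr_deriv (by simp; ring)) (by norm_num)
    (fun y hy => by have := sin_lb1 hy; nlinarith) hx
  linarith

lemma sin_ub2 {x : ℝ} (hx : 0 ≤ x) : Real.sin x ≤ x - x^3/6 + x^5/120 := by
  have h := aux_nonneg_of_deriv (f := fun y => y - y^3/6 + y^5/120 - Real.sin y)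
    (f' := fun y => 1 - y^2/2 + y^4/24 - Real.cos y) (fun y => by
      have h1 := (((hasDerivAt_id y).sub ((hasDerivAt_pow 3 y).div_const 6)).add ((hasDerivAt_pow 5 y).div_const 120)).sub (Real.hasDerivAt_sin y)
      exact h1.congr_deriv (by simp; ring)) (by norm_num)
    (fun y hy => by have := cos_ub2 hy; nlinarith) hx
  linarith

lemma cos_lb3 {x : ℝ} (hx : 0 ≤ x) : 1 - x^2/2 + x^4/24 - x^6/720 ≤ Real.cos x := by
  have h := aux_nonneg_of_deriv (f := fun y => Real.cos y - (1 - y^2/2 + y^4/24 - y^6/720))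
    (f' := fun y => -Real.sin y + y - y^3/6 + y^5/120) (fun y => by
      have h1 := (Real.hasDerivAt_cos y).sub (((((hasDerivAt_pow 2 y).div_const 2).neg.const_add 1).add ((hasDerivAt_pow 4 y).div_const 24)).sub ((hasDerivAt_pow 6 y).div_const 720))
      exact h1.congr_deriv (by simp; ring)) (by norm_num)
    (fun y hy => by have := sin_ub2 hy; nlinarith) hx
  linarith

lemma sin_lb3 {x : ℝ} (hx : 0 ≤ x) : x - x^3/6 + x^5/120 - x^7/5040 ≤ Real.sin x := by
  have h := aux_nonneg_of_deriv (f := fun y => Real.sin y - (y - y^3/6 + y^5/120 - y^7/5040))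
    (f' := fun y => Real.cos y - (1 - y^2/2 + y^4/24 - y^6/720)) (fun y => by
      have h1 := (Real.hasDerivAt_sin y).sub ((((hasDerivAt_id y).sub ((hasDerivAt_pow 3 y).div_const 6)).add ((hasDerivAt_pow 5 y).div_const 120)).sub ((hasDerivAt_pow 7 y).div_const 5040))
      exact h1.congr_deriv (by simp; ring)) (by norm_num)
    (fun y hy => by have := cos_lb3 hy; nlinarith) hx
  linarith

theorem stmt_7 (x : ℝ) (hx : x ∈ Set.Icc (0 : ℝ) π) :
    0 ≤ (x ^ 2 / 12) * (x + Real.sin x) - 2 * Real.sin (x / 2) + x * Real.cos (x / 2) := by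
  obtain ⟨hx0, hxpi⟩ := hx
  have hx2 : x^2 ≤ 9.9225 := by nlinarith [Real.pi_lt_d2, Real.pi_pos]
  have hh : (0:ℝ) ≤ x/2 := by linarith
  have hs := sin_lb3 hx0
  have hsh := sin_ub2 hh
  have hch := cos_lb3 hh
  -- P(x) = x³/12 − 17x⁵/1440 + 31x⁷/46080 − x⁹/60480 ≥ 0
  have hg : 0 ≤ 80640 - 11424*x^2 + 651*x^4 - 16*x^6 := by
    nlinarith [sq_nonneg x, mul_nonneg (sq_nonneg x) (sq_nonneg x),
      mul_nonneg (sub_nonneg.2 hx2) (sq_nonneg x),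
      mul_nonneg (mul_nonneg (sub_nonneg.2 hx2) (sq_nonneg x)) (sq_nonneg x),
      sq_nonneg (x^2 - 9.9225)]
  have hP : 0 ≤ x^3/12 - 17*x^5/1440 + 31*x^7/46080 - x^9/60480 := by
    have h3 : 0 ≤ x^3 := pow_nonneg hx0 3
    nlinarith [mul_nonneg h3 hg]
  nlinarith [mul_nonneg (sq_nonneg x) (sub_nonneg.2 hs), mul_nonneg hx0 (sub_nonneg.2 hch), hP]
end

section
/- Let m > 0 and n ≥ 2 be an integer. The function f(x) = m sin(πx/(mn)) − x sin(π/n) on [0, m) vanishes only at x = 0; in particular if λ₀ ∈ [0, m) satisfies λ₀ sin(π/n) = m sin(πλ₀/(mn)), then λ₀ = 0. -/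
open Real

theorem stmt_10 (m : ℝ) (hm : 0 < m) (n : ℕ) (hn : 2 ≤ n)
    (lam0 : ℝ) (hlam : lam0 ∈ Set.Ico (0 : ℝ) m)
    (heq : lam0 * Real.sin (π / n) = m * Real.sin (π * lam0 / (m * n))) :
    lam0 = 0 := by
  by_contra h
  have hl0 : 0 < lam0 := lt_of_le_of_ne hlam.1 (Ne.symm h)
  have hlm : lam0 < m := hlam.2
  have hn0 : (0:ℝ) < n := by
    have : (2:ℝ) ≤ n := by exact_mod_cast hn
    linarith
  set t := lam0 / m with ht
  have ht0 : 0 < t := div_pos hl0 hm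
  have ht1 : t < 1 := (div_lt_one hm).2 hlm
  have hx0 : 0 < π / n := div_pos Real.pi_pos hn0
  have hxπ : π / n ≤ π := by
    rw [div_le_iff₀ hn0]
    have h2 : (2:ℝ) ≤ n := by exact_mod_cast hn
    nlinarith [Real.pi_pos]
  have key := strictConcaveOn_sin_Icc.2 ⟨le_refl 0, Real.pi_pos.le⟩
      ⟨hx0.le, hxπ⟩ hx0.ne (sub_pos.2 ht1) ht0
      (by ring : (1 - t) + t = 1)
  simp only [smul_eq_mul, mul_zero, Real.sin_zero, add_zero, zero_add] at key
  have harg : t * (π / n) = π * lam0 / (m * n) := by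
    rw [ht]
    field_simp
  rw [harg] at key
  have : lam0 * Real.sin (π / n) < m * Real.sin (π * lam0 / (m * n)) := by
    have := mul_lt_mul_of_pos_left key hm
    calc lam0 * Real.sin (π / n) = m * (t * Real.sin (π / n)) := by
            rw [ht]; field_simp
      _ < m * Real.sin (π * lam0 / (m * n)) := this
  linarith
end

section
/- Suppose λ₀, m, ℓ_k, ℓ_{k+1}, ℓ_{k+2}, ℓ_{k+3} are real numbers with m ≠ 0 satisfying λ₀ sin((ℓ_k+ℓ_{k+1})/2) = m sin((ℓ_{k+1}−ℓ_k)/2) and λ₀ sin((ℓ_{k+1}+ℓ_{k+2})/2) = −m sin((ℓ_{k+2}−ℓ_{k+1})/2), with all ℓ's in (0, π). Then ℓ_k = ℓ_{k+2}. -/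
open Real

theorem stmt_11 (lam0 m ℓk ℓk1 ℓk2 ℓk3 : ℝ) (hm : m ≠ 0)
    (hℓk : ℓk ∈ Set.Ioo (0 : ℝ) π) (hℓk1 : ℓk1 ∈ Set.Ioo (0 : ℝ) π)
    (hℓk2 : ℓk2 ∈ Set.Ioo (0 : ℝ) π) (hℓk3 : ℓk3 ∈ Set.Ioo (0 : ℝ) π)
    (h1 : lam0 * Real.sin ((ℓk + ℓk1) / 2) = m * Real.sin ((ℓk1 - ℓk) / 2))
    (h2 : lam0 * Real.sin ((ℓk1 + ℓk2) / 2) = -m * Real.sin ((ℓk2 - ℓk1) / 2)) :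
    ℓk = ℓk2 := by
  obtain ⟨hk0, hkpi⟩ := hℓk
  obtain ⟨hk10, hk1pi⟩ := hℓk1
  obtain ⟨hk20, hk2pi⟩ := hℓk2
  have e : Real.sin ((ℓk1 - ℓk)/2) * Real.sin ((ℓk1 + ℓk2)/2) +
      Real.sin ((ℓk2 - ℓk1)/2) * Real.sin ((ℓk + ℓk1)/2) =
      Real.sin ℓk1 * Real.sin ((ℓk2 - ℓk)/2) := by
    have hs : Real.sin ℓk1 = 2 * Real.sin (ℓk1/2) * Real.cos (ℓk1/2) := by
      rw [← Real.sin_two_mul]; congr 1; ring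
    rw [show (ℓk1 - ℓk)/2 = ℓk1/2 - ℓk/2 by ring,
        show (ℓk1 + ℓk2)/2 = ℓk1/2 + ℓk2/2 by ring,
        show (ℓk2 - ℓk1)/2 = ℓk2/2 - ℓk1/2 by ring,
        show (ℓk + ℓk1)/2 = ℓk/2 + ℓk1/2 by ring,
        show (ℓk2 - ℓk)/2 = ℓk2/2 - ℓk/2 by ring,
        hs, Real.sin_sub, Real.sin_add, Real.sin_sub, Real.sin_add, Real.sin_sub]
    ring
  have key : m * (Real.sin ℓk1 * Real.sin ((ℓk2 - ℓk)/2)) = 0 := by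
    linear_combination (-Real.sin ((ℓk1 + ℓk2)/2)) * h1 + Real.sin ((ℓk + ℓk1)/2) * h2 - m * e
  have hs1 : Real.sin ℓk1 > 0 := Real.sin_pos_of_pos_of_lt_pi hk10 hk1pi
  have hz : Real.sin ((ℓk2 - ℓk)/2) = 0 := by
    rcases mul_eq_zero.mp key with h | h
    · exact absurd h hm
    · rcases mul_eq_zero.mp h with h' | h'
      · linarith
      · exact h'
  have hb1 : -π < (ℓk2 - ℓk)/2 := by linarith [Real.pi_pos]
  have hb2 : (ℓk2 - ℓk)/2 < π := by linarith [Real.pi_pos]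
  have := (Real.sin_eq_zero_iff_of_lt_of_lt hb1 hb2).mp hz
  linarith
end

section
/- For a, b real with a < b and sin(b−a) ≠ 0, the function u(x) = A₀ cos x + B₀ sin x − c − (d/2) x sin x with A₀ = c cos((a+b)/2)/cos((b−a)/2) − (d/2)(b−a) sin a sin b / sin(b−a) and B₀ = c sin((a+b)/2)/cos((b−a)/2) + (d/2)(b sin b cos a − a sin a cos b)/sin(b−a) satisfies u(a) = 0 and u(b) = 0. -/
open Real

theorem stmt_12 (a b c d : ℝ) (hab : a < b)
    (hsin : Real.sin (b - a) ≠ 0) (hcos : Real.cos ((b - a) / 2) ≠ 0)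
    (A₀ B₀ : ℝ)
    (hA₀ : A₀ = c * Real.cos ((a + b) / 2) / Real.cos ((b - a) / 2) -
      (d / 2) * (b - a) * Real.sin a * Real.sin b / Real.sin (b - a))
    (hB₀ : B₀ = c * Real.sin ((a + b) / 2) / Real.cos ((b - a) / 2) +
      (d / 2) * (b * Real.sin b * Real.cos a - a * Real.sin a * Real.cos b) / Real.sin (b - a))
    (u : ℝ → ℝ)
    (hu : ∀ x, u x = A₀ * Real.cos x + B₀ * Real.sin x - c - (d / 2) * x * Real.sin x) :
    u a = 0 ∧ u b = 0 := by
  have h1 : Real.cos ((b - a) / 2) =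
      Real.cos ((a + b) / 2) * Real.cos a + Real.sin ((a + b) / 2) * Real.sin a := by
    rw [show (b - a) / 2 = (a + b) / 2 - a by ring, Real.cos_sub]
  have h2 : Real.cos ((b - a) / 2) =
      Real.cos b * Real.cos ((a + b) / 2) + Real.sin b * Real.sin ((a + b) / 2) := by
    rw [show (b - a) / 2 = b - (a + b) / 2 by ring, Real.cos_sub]
  have hs : Real.sin (b - a) = Real.sin b * Real.cos a - Real.cos b * Real.sin a :=
    Real.sin_sub b a
  constructor
  · rw [hu, hA₀, hB₀]
    field_simp
    linear_combination (-(2*c*Real.sin (b-a)))*h1 +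
      (-(d*a*Real.sin a*Real.cos ((b-a)/2)))*hs
  · rw [hu, hA₀, hB₀]
    field_simp
    linear_combination (-(2*c*Real.sin (b-a)))*h2 +
      (-(d*b*Real.sin b*Real.cos ((b-a)/2)))*hs
end

section
/- Let a ∈ ℝ, m + λ₀ > 0 and λ₁ ∈ ℝ. If the boundary value problem −u'' − u = (m + λ₀) + λ₁ cos x on (a, a+π), u(a) = u(a+π) = 0, has a solution, then m + λ₀ = (λ₁ π /4) sin a. -/
open Real

theorem stmt_14 (a m lam0 lam1 : ℝ) (hpos : 0 < m + lam0)
    (hex : ∃ u : ℝ → ℝ, ContDiff ℝ 2 u ∧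
      (∀ x ∈ Set.Icc a (a + π),
        -(deriv (deriv u) x) - u x = (m + lam0) + lam1 * Real.cos x) ∧
      u a = 0 ∧ u (a + π) = 0) :
    m + lam0 = lam1 * π / 4 * Real.sin a := by
  obtain ⟨u, hC2, heq, ha0, hb0⟩ := hex
  have hle : a ≤ a + π := by linarith [Real.pi_pos]
  have hdu : Differentiable ℝ u := hC2.differentiable (by norm_num)
  have hC2' : ContDiff ℝ (1 + 1) u := by norm_num [hC2]
  have hC1 : ContDiff ℝ 1 (deriv u) := (contDiff_succ_iff_deriv.mp hC2').2.2
  have hddu : Differentiable ℝ (deriv u) := hC1.differentiable (by norm_num)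
  have hcont : Continuous (deriv (deriv u)) := hC1.continuous_deriv le_rfl
  set F : ℝ → ℝ := fun x => -(deriv u x) * Real.sin (x - a) + u x * Real.cos (x - a) with hF
  have hs : ∀ x : ℝ, HasDerivAt (fun y => Real.sin (y - a)) (Real.cos (x - a)) x := by
    intro x
    exact HasDerivAt.comp_sub_const x a (Real.hasDerivAt_sin (x - a))
  have hc : ∀ x : ℝ, HasDerivAt (fun y => Real.cos (y - a)) (-Real.sin (x - a)) x := by
    intro x
    exact HasDerivAt.comp_sub_const x a (Real.hasDerivAt_cos (x - a))
  have hFd : ∀ x, HasDerivAt F ((-(deriv (deriv u) x) - u x) * Real.sin (x - a)) x := by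
    intro x
    have h1 := ((hddu x).hasDerivAt.neg.mul (hs x))
    have h2 := ((hdu x).hasDerivAt.mul (hc x))
    refine (h1.add h2).congr_deriv ?_
    simp only [Pi.neg_apply]
    ring
  have hintF : IntervalIntegrable (fun x => (-(deriv (deriv u) x) - u x) * Real.sin (x - a))
      MeasureTheory.volume a (a + π) := by
    exact ((hcont.neg.sub hC2.continuous).mul
      (Real.continuous_sin.comp (continuous_id.sub continuous_const))).intervalIntegrable a (a + π)
  have hI1 : ∫ x in a..(a + π), (-(deriv (deriv u) x) - u x) * Real.sin (x - a)
      = F (a + π) - F a :=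
    intervalIntegral.integral_eq_sub_of_hasDerivAt (fun x _ => hFd x) hintF
  have hFa : F a = 0 := by simp [hF, ha0]
  have hFb : F (a + π) = 0 := by simp [hF, hb0, add_sub_cancel_left, Real.sin_pi]
  set G : ℝ → ℝ := fun x =>
    -(m + lam0) * Real.cos (x - a) - lam1 * Real.cos (2 * x - a) / 4
      - lam1 * Real.sin a * x / 2 with hG
  have hGd : ∀ x, HasDerivAt G (((m + lam0) + lam1 * Real.cos x) * Real.sin (x - a)) x := by
    intro x
    have hc2 : HasDerivAt (fun y => Real.cos (2 * y - a)) (-Real.sin (2 * x - a) * 2) x := by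
      have hlin : HasDerivAt (fun y : ℝ => 2 * y - a) 2 x := by
        simpa using ((hasDerivAt_id x).const_mul 2).sub_const a
      exact (Real.hasDerivAt_cos (2 * x - a)).comp x hlin
    have h1 := ((hc x).const_mul (-(m + lam0)))
    have h2 := ((hc2.const_mul lam1).div_const 4)
    have h3 := (((hasDerivAt_id x).const_mul (lam1 * Real.sin a)).div_const 2)
    have h := (h1.sub h2).sub h3
    refine h.congr_deriv ?_
    have e1 : Real.sin (2 * x - a) = Real.sin x * Real.cos (x - a) + Real.cos x * Real.sin (x - a) := by
      rw [show 2 * x - a = x + (x - a) by ring, Real.sin_add]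
    have e2 : Real.sin a = Real.sin x * Real.cos (x - a) - Real.cos x * Real.sin (x - a) := by
      rw [← Real.sin_sub, sub_sub_cancel]
    linear_combination (lam1 / 2) * e1 - (lam1 / 2) * e2
  have hintG : IntervalIntegrable (fun x => ((m + lam0) + lam1 * Real.cos x) * Real.sin (x - a))
      MeasureTheory.volume a (a + π) := by
    exact ((continuous_const.add (continuous_const.mul Real.continuous_cos)).mul
      (Real.continuous_sin.comp (continuous_id.sub continuous_const))).intervalIntegrable a (a + π)
  have hI2 : ∫ x in a..(a + π), ((m + lam0) + lam1 * Real.cos x) * Real.sin (x - a)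
      = G (a + π) - G a :=
    intervalIntegral.integral_eq_sub_of_hasDerivAt (fun x _ => hGd x) hintG
  have hcongr : ∫ x in a..(a + π), (-(deriv (deriv u) x) - u x) * Real.sin (x - a)
      = ∫ x in a..(a + π), ((m + lam0) + lam1 * Real.cos x) * Real.sin (x - a) := by
    apply intervalIntegral.integral_congr
    intro x hx
    rw [Set.uIcc_of_le hle] at hx
    exact congrArg (· * Real.sin (x - a)) (heq x hx)
  have hzero : G (a + π) - G a = 0 := by
    rw [← hI2, ← hcongr, hI1, hFa, hFb]; ring
  have hGb : G (a + π) = (m + lam0) - lam1 * Real.cos a / 4 - lam1 * Real.sin a * (a + π) / 2 := by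
    have e1 : a + π - a = π := by ring
    have e2 : 2 * (a + π) - a = a + 2 * π := by ring
    simp [hG, e1, e2, Real.cos_pi, Real.cos_add_two_pi]
  have hGa : G a = -(m + lam0) - lam1 * Real.cos a / 4 - lam1 * Real.sin a * a / 2 := by
    have e1 : a - a = 0 := by ring
    have e2 : 2 * a - a = a := by ring
    simp [hG, e1, e2]
  rw [hGb, hGa] at hzero
  nlinarith [hzero]
end

section
/- Let G(x,y) = sqrt(sin x sin y)/y on [0, π/2] × [1.17/2, π/2]. Then for all t ∈ [0, π/3], G(t, t + π/6) ≤ 2/π; moreover, since G is increasing in x and decreasing in y on this domain, G(x,y) < 2/π whenever y > x + π/6 with x ∈ [0, π/3], y ∈ [1.17/2, π/2]. -/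
open Real

private lemma nonneg_of_hasDerivAt (f f' : ℝ → ℝ) (hd : ∀ x, HasDerivAt f (f' x) x)
    (h0 : f 0 = 0) (hf' : ∀ x, 0 ≤ x → 0 ≤ f' x) {x : ℝ} (hx : 0 ≤ x) : 0 ≤ f x := by
  have hc : Continuous f := by
    rw [continuous_iff_continuousAt]; exact fun x => (hd x).continuousAt
  have hm : MonotoneOn f (Set.Ici 0) := by
    apply monotoneOn_of_deriv_nonneg (convex_Ici 0) hc.continuousOn
      (fun y _ => (hd y).differentiableAt.differentiableWithinAt)
    intro y hy
    rw [(hd y).deriv]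
    exact hf' y (le_of_lt (by simpa using hy))
  calc (0:ℝ) = f 0 := h0.symm
  _ ≤ f x := hm (Set.self_mem_Ici) hx hx

private lemma hp17 (n : ℕ) (c x : ℝ) : HasDerivAt (fun x : ℝ => x^n/c) ((n:ℝ) * x^(n-1)/c) x :=
  (hasDerivAt_pow n x).div_const c

private lemma sin_ge3 {x : ℝ} (hx : 0 ≤ x) : x - x^3/6 ≤ sin x := by
  have := nonneg_of_hasDerivAt (fun x => sin x - x + x^3/6)
    (fun x => cos x - 1 + (3 * x^2)/6)
    (fun x => (((Real.hasDerivAt_sin x).sub (hasDerivAt_id x)).add (hp17 3 6 x)).congr_deriv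
      (by push_cast; ring))
    (by norm_num)
    (fun x hx => by nlinarith [Real.one_sub_sq_div_two_le_cos (x := x)]) hx
  linarith

private lemma cos_le4 {x : ℝ} (hx : 0 ≤ x) : cos x ≤ 1 - x^2/2 + x^4/24 := by
  have := nonneg_of_hasDerivAt (fun x => 1 - x^2/2 + x^4/24 - cos x)
    (fun x => -((2*x)/2) + (4*x^3)/24 + sin x)
    (fun x => ((((hasDerivAt_const x (1:ℝ)).sub (hp17 2 2 x)).add (hp17 4 24 x)).sub
      (Real.hasDerivAt_cos x)).congr_deriv (by push_cast; ring))
    (by norm_num)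
    (fun x hx => by nlinarith [sin_ge3 hx]) hx
  linarith

private lemma sin_le5 {x : ℝ} (hx : 0 ≤ x) : sin x ≤ x - x^3/6 + x^5/120 := by
  have := nonneg_of_hasDerivAt (fun x => x - x^3/6 + x^5/120 - sin x)
    (fun x => 1 - (3*x^2)/6 + (5*x^4)/120 - cos x)
    (fun x => ((((hasDerivAt_id x).sub (hp17 3 6 x)).add (hp17 5 120 x)).sub
      (Real.hasDerivAt_sin x)).congr_deriv (by push_cast; ring))
    (by norm_num)
    (fun x hx => by nlinarith [cos_le4 hx]) hx
  linarith

private lemma cos_ge6 {x : ℝ} (hx : 0 ≤ x) : 1 - x^2/2 + x^4/24 - x^6/720 ≤ cos x := by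
  have := nonneg_of_hasDerivAt (fun x => cos x - (1 - x^2/2 + x^4/24 - x^6/720))
    (fun x => -sin x - (-((2*x)/2) + (4*x^3)/24 - (6*x^5)/720))
    (fun x => ((Real.hasDerivAt_cos x).sub ((((hasDerivAt_const x (1:ℝ)).sub (hp17 2 2 x)).add
      (hp17 4 24 x)).sub (hp17 6 720 x))).congr_deriv (by push_cast; ring))
    (by norm_num)
    (fun x hx => by nlinarith [sin_le5 hx]) hx
  linarith

private lemma sin_ge7 {x : ℝ} (hx : 0 ≤ x) : x - x^3/6 + x^5/120 - x^7/5040 ≤ sin x := by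
  have := nonneg_of_hasDerivAt (fun x => sin x - (x - x^3/6 + x^5/120 - x^7/5040))
    (fun x => cos x - (1 - (3*x^2)/6 + (5*x^4)/120 - (7*x^6)/5040))
    (fun x => ((Real.hasDerivAt_sin x).sub ((((hasDerivAt_id x).sub (hp17 3 6 x)).add
      (hp17 5 120 x)).sub (hp17 7 5040 x))).congr_deriv (by push_cast; ring))
    (by norm_num)
    (fun x hx => by nlinarith [cos_ge6 hx]) hx
  linarith

private lemma cos_le8 {x : ℝ} (hx : 0 ≤ x) : cos x ≤ 1 - x^2/2 + x^4/24 - x^6/720 + x^8/40320 := by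
  have := nonneg_of_hasDerivAt (fun x => 1 - x^2/2 + x^4/24 - x^6/720 + x^8/40320 - cos x)
    (fun x => -((2*x)/2) + (4*x^3)/24 - (6*x^5)/720 + (8*x^7)/40320 + sin x)
    (fun x => (((((hasDerivAt_const x (1:ℝ)).sub (hp17 2 2 x)).add (hp17 4 24 x)).sub
      (hp17 6 720 x)).add (hp17 8 40320 x)).sub (Real.hasDerivAt_cos x) |>.congr_deriv
      (by push_cast; ring))
    (by norm_num)
    (fun x hx => by nlinarith [sin_ge7 hx]) hx
  linarith

private lemma sin_le9 {x : ℝ} (hx : 0 ≤ x) :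
    sin x ≤ x - x^3/6 + x^5/120 - x^7/5040 + x^9/362880 := by
  have := nonneg_of_hasDerivAt
    (fun x => x - x^3/6 + x^5/120 - x^7/5040 + x^9/362880 - sin x)
    (fun x => 1 - (3*x^2)/6 + (5*x^4)/120 - (7*x^6)/5040 + (9*x^8)/362880 - cos x)
    (fun x => (((((hasDerivAt_id x).sub (hp17 3 6 x)).add (hp17 5 120 x)).sub
      (hp17 7 5040 x)).add (hp17 9 362880 x)).sub (Real.hasDerivAt_sin x) |>.congr_deriv
      (by push_cast; ring))
    (by norm_num)
    (fun x hx => by nlinarith [cos_le8 hx]) hx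
  linarith

private lemma polyneg17 {w : ℝ} (h0 : 0 ≤ w) (hB : w ≤ 1.0471977) :
    (0.86602541 : ℝ) + (w - w^3/6 + w^5/120 - w^7/5040 + w^9/362880) ≤
      8/9 + 0.848826*w + 0.2026422*w^2 := by
  have hw2 : w^2 ≤ 72 := by nlinarith
  have h79 : w^9/362880 ≤ w^7/5040 := by
    have h := mul_nonneg (pow_nonneg h0 7) (by linarith : (0:ℝ) ≤ 72 - w^2)
    nlinarith [h]
  have hBw : (0:ℝ) ≤ 1.0471977 - w := by linarith
  nlinarith [sq_nonneg (w - 0.2782), mul_nonneg h0 (sq_nonneg (w - 0.2782)),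
    mul_nonneg (mul_nonneg hBw h0) (sq_nonneg (w - 0.2782)),
    mul_nonneg (mul_nonneg hBw (mul_nonneg h0 h0)) (sq_nonneg (w - 0.2782))]

private lemma polypos17 {w : ℝ} (h0 : 0 ≤ w) (hB : w ≤ 1.0471977) :
    (0.86602541 : ℝ) - (w - w^3/6 + w^5/120 - w^7/5040) ≤
      8/9 - 0.8488266*w + 0.2026422*w^2 := by
  have hBw : (0:ℝ) ≤ 1.0471977 - w := by linarith
  nlinarith [sq_nonneg w, mul_nonneg h0 (mul_nonneg h0 h0),
    mul_nonneg (mul_nonneg hBw h0) (mul_nonneg h0 h0),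
    mul_nonneg (mul_nonneg (mul_nonneg hBw h0) (mul_nonneg h0 h0)) (mul_nonneg h0 h0)]

private lemma sqrt3_le : Real.sqrt 3 / 2 ≤ 0.86602541 := by
  rw [div_le_iff₀ (by norm_num : (0:ℝ) < 2)]
  rw [show (0.86602541 : ℝ) * 2 = 1.73205082 by norm_num]
  rw [show (1.73205082 : ℝ) = Real.sqrt (1.73205082^2) by
    rw [Real.sqrt_sq (by norm_num)]]
  exact Real.sqrt_le_sqrt (by norm_num)

private lemma keyv {v : ℝ} (h1 : -(π/3) ≤ v) (h2 : v ≤ π/3) :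
    Real.sqrt 3 / 2 - sin v ≤ 8/9 - 8/(3*π)*v + 2/π^2*v^2 := by
  have hπl := Real.pi_gt_d6
  have hπu := Real.pi_lt_d6
  have hπ : (0:ℝ) < π := Real.pi_pos
  have hr3 := sqrt3_le
  have hc1 : (0.2026422:ℝ) ≤ 2/π^2 := by
    rw [le_div_iff₀ (by positivity)]; nlinarith
  rcases le_or_gt 0 v with hv0 | hv0
  · have hvB : v ≤ 1.0471977 := by linarith
    have hs := sin_ge7 hv0
    have hc2 : 8/(3*π) ≤ 0.8488266 := by
      rw [div_le_iff₀ (by positivity)]; nlinarith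
    have hc2v := mul_le_mul_of_nonneg_right hc2 hv0
    have hc1v := mul_le_mul_of_nonneg_right hc1 (sq_nonneg v)
    have hpoly := polypos17 hv0 hvB
    nlinarith [hc2v, hc1v]
  · set w := -v with hw
    have hw0 : (0:ℝ) ≤ w := by simp [hw]; linarith
    have hwB : w ≤ 1.0471977 := by simp [hw]; linarith
    have hsv : sin v = -sin w := by rw [hw, Real.sin_neg, neg_neg]
    have hs := sin_le9 hw0
    have hc2 : (0.848826:ℝ) ≤ 8/(3*π) := by
      rw [le_div_iff₀ (by positivity)]; nlinarith
    have hc2v := mul_le_mul_of_nonneg_right hc2 hw0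
    have hc1v := mul_le_mul_of_nonneg_right hc1 (sq_nonneg w)
    have hpoly := polyneg17 hw0 hwB
    have hvw : v = -w := by rw [hw, neg_neg]
    rw [hvw, Real.sin_neg]
    nlinarith [hc2v, hc1v]

private lemma keyu {u : ℝ} (h1 : π/6 ≤ u) (h2 : u ≤ 5*π/6) :
    Real.sqrt 3 / 2 - cos u ≤ 2/π^2 * (u + π/6)^2 := by
  have hπ : (0:ℝ) < π := Real.pi_pos
  have hcos : cos u = sin (π/2 - u) := (Real.sin_pi_div_two_sub u).symm
  have hk := keyv (v := π/2 - u) (by linarith) (by linarith)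
  have hq : 2/π^2 * (u + π/6)^2
      = 8/9 - 8/(3*π)*(π/2 - u) + 2/π^2*(π/2 - u)^2 := by
    field_simp; ring
  rw [hcos, hq]
  exact hk

private lemma part1 : ∀ t ∈ Set.Icc (0 : ℝ) (π / 3),
    Real.sqrt (Real.sin t * Real.sin (t + π / 6)) / (t + π / 6) ≤ 2 / π := by
  intro t ht
  obtain ⟨ht0, ht3⟩ := ht
  have hπ : (0:ℝ) < π := Real.pi_pos
  have hy0 : 0 < t + π/6 := by linarith
  rw [div_le_iff₀ hy0]
  have hprod : sin t * sin (t + π/6) = (cos (π/6) - cos (2*t + π/6))/2 := by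
    rw [Real.cos_sub_cos, show (π/6 + (2*t + π/6))/2 = t + π/6 by ring,
      show (π/6 - (2*t + π/6))/2 = -t by ring, Real.sin_neg]
    ring
  have hkey := keyu (u := 2*t + π/6) (by linarith) (by linarith)
  have hle : sin t * sin (t + π/6) ≤ (2/π * (t + π/6))^2 := by
    rw [hprod, Real.cos_pi_div_six]
    have hexp : 2/π^2 * (2*t + π/6 + π/6)^2 = 2 * (2/π * (t + π/6))^2 := by
      field_simp; ring
    rw [hexp] at hkey
    linarith
  calc Real.sqrt (sin t * sin (t + π/6)) ≤ Real.sqrt ((2/π * (t + π/6))^2) :=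
        Real.sqrt_le_sqrt hle
  _ = 2/π * (t + π/6) := Real.sqrt_sq (by positivity)

theorem stmt_17 :
    (∀ t ∈ Set.Icc (0 : ℝ) (π / 3),
      Real.sqrt (Real.sin t * Real.sin (t + π / 6)) / (t + π / 6) ≤ 2 / π) ∧
    (∀ x y : ℝ, x ∈ Set.Icc (0 : ℝ) (π / 3) → y ∈ Set.Icc (1.17 / 2) (π / 2) →
      y > x + π / 6 → Real.sqrt (Real.sin x * Real.sin y) / y < 2 / π) := by
  have hπ : (0:ℝ) < π := Real.pi_pos
  refine ⟨part1, ?_⟩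
  intro x y hx hy hxy
  obtain ⟨hx0, hx3⟩ := hx
  obtain ⟨hy1, hy2⟩ := hy
  have h2π : (0:ℝ) < 2/π := by positivity
  rcases eq_or_lt_of_le hx0 with h | h
  · rw [← h]
    simp [Real.sin_zero]
    positivity
  · -- x > 0
    have hb0 : 0 < x + π/6 := by linarith
    have hy0 : 0 < y := by linarith
    have hbπ : x + π/6 < π/2 := by linarith
    have hsx : 0 < sin x := Real.sin_pos_of_pos_of_lt_pi h (by linarith)
    have hsb : 0 < sin (x + π/6) :=
      Real.sin_pos_of_pos_of_lt_pi hb0 (by linarith)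
    have hsy : 0 < sin y := Real.sin_pos_of_pos_of_lt_pi hy0 (by linarith)
    -- strict antitonicity of z ↦ sin z / z^2 on [π/6, π/2]
    have hanti : StrictAntiOn (fun z : ℝ => sin z / z^2) (Set.Icc (π/6) (π/2)) := by
      have hder : ∀ z : ℝ, 0 < z → HasDerivAt (fun z : ℝ => sin z / z^2)
          ((cos z * z^2 - sin z * (2*z)) / (z^2)^2) z := by
        intro z hz
        have := (Real.hasDerivAt_sin z).div (hasDerivAt_pow 2 z) (by positivity)
        exact this.congr_deriv (by push_cast; ring)
      apply strictAntiOn_of_deriv_neg (convex_Icc _ _)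
      · apply ContinuousOn.div Real.continuous_sin.continuousOn
          (continuous_pow 2).continuousOn
        intro z hz
        have : (0:ℝ) < z := lt_of_lt_of_le (by positivity) hz.1
        positivity
      · intro z hz
        rw [interior_Icc] at hz
        have hz0 : 0 < z := lt_trans (by positivity) hz.1
        have hzπ : z < π/2 := hz.2
        rw [(hder z hz0).deriv]
        have hcz : 0 < cos z := Real.cos_pos_of_mem_Ioo ⟨by linarith, hzπ⟩
        have hsz : 0 < sin z := Real.sin_pos_of_pos_of_lt_pi hz0 (by linarith)
        have htan : z < tan z := Real.lt_tan hz0 hzπ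
        have hzc : z * cos z < sin z := by
          rw [Real.tan_eq_sin_div_cos, lt_div_iff₀ hcz] at htan
          linarith
        apply div_neg_of_neg_of_pos
        · nlinarith
        · positivity
    have hmono : sin y / y^2 < sin (x + π/6) / (x + π/6)^2 := by
      have := hanti (Set.mem_Icc.mpr ⟨by linarith, by linarith⟩)
        (Set.mem_Icc.mpr ⟨by linarith, hy2⟩) hxy
      simpa using this
    have h1 := part1 x ⟨hx0, hx3⟩
    have hsq1 : (Real.sqrt (sin x * sin (x + π/6)) / (x + π/6))^2
        = sin x * (sin (x + π/6) / (x + π/6)^2) := by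
      rw [div_pow, Real.sq_sqrt (by positivity)]
      ring
    have hsq2 : (Real.sqrt (sin x * sin y) / y)^2 = sin x * (sin y / y^2) := by
      rw [div_pow, Real.sq_sqrt (by positivity)]
      ring
    have hlt : (Real.sqrt (sin x * sin y) / y)^2 < (2/π)^2 := by
      rw [hsq2]
      calc sin x * (sin y / y^2) < sin x * (sin (x + π/6) / (x + π/6)^2) :=
            (mul_lt_mul_iff_right₀ hsx).mpr hmono
      _ = (Real.sqrt (sin x * sin (x + π/6)) / (x + π/6))^2 := hsq1.symm
      _ ≤ (2/π)^2 := by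
            apply pow_le_pow_left₀ (by positivity) h1
    exact lt_of_pow_lt_pow_left₀ 2 (le_of_lt h2π) hlt
end
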